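/- Let (r_t)_{t=1}^T be a sequence of real numbers and for each n ≤ T define MV_n = ρ·μ̂_n − σ̂²_n, where μ̂_n = (1/n)·Σ_{t=1}^n r_t and σ̂²_n = (1/n)·Σ_{t=1}^n (r_t − μ̂_n)². If all r_t ∈ [0,1], then for every T ≥ 2, T·MV_T ≥ (T−1)·MV_{T−1} − 2. -/

import Mathlib

theorem stmt_5 (r : ℕ → ℝ) (ρ : ℝ) (hρ : 0 ≤ ρ)
    (hr : ∀ t, r t ∈ Set.Icc (0 : ℝ) 1)
    (μhat σ2 MV : ℕ → ℝ)
    (hμ : ∀ n, μhat n = (∑ t ∈ Finset.Icc 1 n, r t) / n)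
    (hσ : ∀ n, σ2 n = (∑ t ∈ Finset.Icc 1 n, (r t - μhat n) ^ 2) / n)
    (hMV : ∀ n, MV n = ρ * μhat n - σ2 n)
    (T : ℕ) (hT : 2 ≤ T) :
    (T : ℝ) * MV T ≥ ((T : ℝ) - 1) * MV (T - 1) - 2 := by
  obtain ⟨m, rfl⟩ : ∃ m, T = m + 1 := ⟨T - 1, by omega⟩
  have hm : 1 ≤ m := by omega
  have hmR : (1:ℝ) ≤ (m:ℝ) := by exact_mod_cast hm
  set S : ℕ → ℝ := fun n => ∑ t ∈ Finset.Icc 1 n, r t with hSdef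
  set Q : ℕ → ℝ := fun n => ∑ t ∈ Finset.Icc 1 n, (r t)^2 with hQdef
  have key : ∀ n : ℕ, 1 ≤ n → (n:ℝ) * MV n = ρ * S n - Q n + (S n)^2 / n := by
    intro n hn
    have hn0 : (n:ℝ) ≠ 0 := Nat.cast_ne_zero.mpr (by omega)
    have hexp : ∑ t ∈ Finset.Icc 1 n, (r t - μhat n)^2
        = Q n - 2 * μhat n * S n + n * (μhat n)^2 := by
      have h1 : ∀ t ∈ Finset.Icc 1 n, (r t - μhat n)^2
          = r t ^ 2 - 2 * μhat n * r t + μhat n ^ 2 := fun t _ => by ring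
      rw [Finset.sum_congr rfl h1]
      rw [Finset.sum_add_distrib, Finset.sum_sub_distrib, ← Finset.mul_sum,
          Finset.sum_const, Nat.card_Icc]
      simp only [hSdef, hQdef, Nat.add_sub_cancel, nsmul_eq_mul]
    rw [hMV, hσ, hexp, hμ]
    simp only [hSdef, hQdef]
    field_simp
    ring
  have hstepS : S (m+1) = S m + r (m+1) := by
    simp only [hSdef]
    rw [Finset.sum_Icc_succ_top (by omega : 1 ≤ m + 1)]
  have hstepQ : Q (m+1) = Q m + (r (m+1))^2 := by
    simp only [hQdef]
    rw [Finset.sum_Icc_succ_top (by omega : 1 ≤ m + 1)]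
  have hS0 : 0 ≤ S m := Finset.sum_nonneg fun t _ => (hr t).1
  have hS1 : S m ≤ (m:ℝ) := by
    calc S m ≤ ∑ t ∈ Finset.Icc 1 m, (1:ℝ) :=
          Finset.sum_le_sum fun t _ => (hr t).2
      _ = (m:ℝ) := by simp [Nat.card_Icc]
  obtain ⟨hb0, hb1⟩ := hr (m+1)
  have hkeyT := key (m+1) (by omega)
  have hkeym := key m hm
  have hcast : ((m + 1 - 1 : ℕ) : ℝ) = (m:ℝ) := by norm_num
  have hcast2 : ((m + 1 : ℕ) : ℝ) = (m:ℝ) + 1 := by push_cast; ring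
  rw [hcast2] at hkeyT
  set a := S m
  set b := r (m+1)
  have hdiv : (a + b)^2 / ((m:ℝ) + 1) - a^2 / (m:ℝ) ≥ -1 := by
    rw [ge_iff_le, div_sub_div _ _ (by positivity) (by positivity),
        le_div_iff₀ (by positivity)]
    nlinarith [mul_nonneg hS0 hb0, sq_nonneg b, mul_nonneg (mul_nonneg hS0 hb0) (le_trans zero_le_one hmR)]
  have hρb : 0 ≤ ρ * b := mul_nonneg hρ hb0
  have hb2 : b^2 ≤ 1 := by nlinarith
  simp only [Nat.add_sub_cancel]
  push_cast
  rw [hkeyT, hstepS, hstepQ]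
  have : (m:ℝ) * MV m = ρ * a - Q m + a^2 / m := hkeym
  nlinarith [hdiv]
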